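/- In the quotient ring B[X_i : i ∈ ℤ]/𝒫 the following identity holds for every n ≥ 1: (X₁X₂⋯Xₙ)^{q−1}·Xₙ = X₀ − Θ·Σ_{i=0}^{n−1} (X₁⋯X_i)^{q−1}·X_{i+1}, where all X_j denote residue classes modulo 𝒫 and the product X₁⋯X_i for i = 0 is the empty product 1. -/

import Mathlib

/-- The ideal generated by the elements `X i ^ q + Θ * X i - X (i-1)` (i ∈ ℤ) in the
polynomial ring over an integral domain `B` in the variables `X i`, `i ∈ ℤ`. -/
noncomputable def carlitzIdeal (B : Type*) [CommRing B] (q : ℕ) (Θ : B) : Ideal (MvPolynomial ℤ B) :=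
  Ideal.span (Set.range fun i : ℤ =>
    MvPolynomial.X i ^ q + MvPolynomial.C Θ * MvPolynomial.X i - MvPolynomial.X (i - 1))

/-- In the quotient ring the identity
`(X₁⋯Xₙ)^(q-1)·Xₙ = X₀ − Θ·∑_{i=0}^{n-1} (X₁⋯X_i)^(q-1)·X_{i+1}` holds for every `n ≥ 1`. -/
theorem stmt_4 {B : Type*} [CommRing B] [IsDomain B]
    (p q e : ℕ) (hp : p.Prime) (he : 0 < e) (hq : q = p ^ e) (Θ : B)
    (n : ℕ) (hn : 1 ≤ n) :
    Ideal.Quotient.mk (carlitzIdeal B q Θ)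
        ((∏ i ∈ Finset.Icc 1 n, MvPolynomial.X (i : ℤ)) ^ (q - 1) *
          MvPolynomial.X (n : ℤ)) =
      Ideal.Quotient.mk (carlitzIdeal B q Θ)
        (MvPolynomial.X (0 : ℤ) - MvPolynomial.C Θ *
          ∑ i ∈ Finset.range n,
            (∏ k ∈ Finset.Icc 1 i, MvPolynomial.X (k : ℤ)) ^ (q - 1) *
              MvPolynomial.X ((i : ℤ) + 1)) := by
  have hq1 : 1 ≤ q := by
    subst hq; exact Nat.one_le_pow _ _ hp.pos
  set mk := Ideal.Quotient.mk (carlitzIdeal B q Θ) with hmk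
  have key : ∀ i : ℤ, mk (MvPolynomial.X i) ^ q =
      mk (MvPolynomial.X (i - 1)) - mk (MvPolynomial.C Θ) * mk (MvPolynomial.X i) := by
    intro i
    have h : mk (MvPolynomial.X i ^ q + MvPolynomial.C Θ * MvPolynomial.X i
        - MvPolynomial.X (i - 1)) = 0 := by
      rw [Ideal.Quotient.eq_zero_iff_mem]
      exact Ideal.subset_span ⟨i, rfl⟩
    simp only [map_sub, map_add, map_mul, map_pow] at h
    linear_combination h
  have hpow : ∀ i : ℤ, mk (MvPolynomial.X i) ^ (q - 1) * mk (MvPolynomial.X i)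
      = mk (MvPolynomial.X i) ^ q := by
    intro i
    rw [← pow_succ, Nat.sub_add_cancel hq1]
  induction n, hn using Nat.le_induction with
  | base =>
    simp only [Finset.Icc_self, Finset.prod_singleton, Finset.sum_range_one,
      Nat.cast_one, Nat.cast_zero, map_mul, map_pow, map_sub, map_sum,
      Finset.Icc_eq_empty_of_lt (by norm_num : (0:ℕ) < 1), Finset.prod_empty,
      one_pow, one_mul, zero_add]
    rw [hpow, key]
    norm_num
  | succ n hn ih =>
    have hIcc : Finset.Icc 1 (n + 1) = insert (n + 1) (Finset.Icc 1 n) := by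
      exact (Finset.insert_Icc_right_eq_Icc_add_one (by omega)).symm
    have hprod : (∏ i ∈ Finset.Icc 1 (n + 1), MvPolynomial.X (i : ℤ) :
        MvPolynomial ℤ B) =
        (∏ i ∈ Finset.Icc 1 n, MvPolynomial.X (i : ℤ)) * MvPolynomial.X ((n : ℤ) + 1) := by
      rw [hIcc, Finset.prod_insert (by simp)]
      push_cast
      ring
    rw [hprod, Finset.sum_range_succ]
    simp only [map_mul, map_pow, map_sub, map_add, map_sum, map_prod] at ih ⊢
    have hx : mk (MvPolynomial.X ((n : ℤ) + 1)) ^ (q - 1) *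
        mk (MvPolynomial.X ((n : ℤ) + 1)) = mk (MvPolynomial.X (n : ℤ)) -
        mk (MvPolynomial.C Θ) * mk (MvPolynomial.X ((n : ℤ) + 1)) := by
      rw [hpow, key]
      norm_num
    push_cast
    calc ((∏ i ∈ Finset.Icc 1 n, mk (MvPolynomial.X (i : ℤ))) *
            mk (MvPolynomial.X ((n : ℤ) + 1))) ^ (q - 1) *
            mk (MvPolynomial.X ((n : ℤ) + 1))
        = (∏ i ∈ Finset.Icc 1 n, mk (MvPolynomial.X (i : ℤ))) ^ (q - 1) *
            (mk (MvPolynomial.X ((n : ℤ) + 1)) ^ (q - 1) *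
              mk (MvPolynomial.X ((n : ℤ) + 1))) := by ring
      _ = (∏ i ∈ Finset.Icc 1 n, mk (MvPolynomial.X (i : ℤ))) ^ (q - 1) *
            (mk (MvPolynomial.X (n : ℤ)) -
              mk (MvPolynomial.C Θ) * mk (MvPolynomial.X ((n : ℤ) + 1))) := by rw [hx]
      _ = _ := by linear_combination ih
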